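/- For every formula φ of the multi-agent S5 modal language and every set of S5-modal relations 𝔯_A: if there is a base ℬ with ⊮_{ℬ,𝔯_A} φ, then there is a maximally-consistent base 𝒞 ⊇ ℬ with ⊮_{𝒞,𝔯_A} φ. -/
import Mathlib


/-- A base rule: a finite set of premiss atoms and a conclusion atom. -/
abbrev Rule := Finset ℕ × ℕ

/-- A base is a collection of base rules. -/
abbrev Base := Set Rule

/-- Derivability of an atom in a base: closure of ∅ under the rules. -/
inductive Deriv (B : Base) : ℕ → Prop where
  | step (L : Finset ℕ) (p : ℕ) (mem : (L, p) ∈ B)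
      (prem : ∀ q ∈ L, Deriv B q) : Deriv B p

/-- A base is inconsistent iff every atom is derivable in it. -/
def Inconsistent (B : Base) : Prop := ∀ p : ℕ, Deriv B p

/-- Formulae of the multi-agent modal language over agents `A`. -/
inductive Form (A : Type) where
  | atom : ℕ → Form A
  | bot  : Form A
  | imp  : Form A → Form A → Form A
  | K    : A → Form A → Form A

/-- Negation abbreviation ¬φ := φ → ⊥. -/
def Form.neg {A : Type} (φ : Form A) : Form A := Form.imp φ Form.bot

/-- Validity at a base given a family of relations on bases. -/
def Valid {A : Type} (R : A → Base → Base → Prop) : Base → Form A → Prop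
  | B, .atom p => Deriv B p
  | B, .bot => ∀ p : ℕ, Deriv B p
  | B, .imp φ ψ => ∀ C : Base, B ⊆ C → Valid R C φ → Valid R C ψ
  | B, .K a φ => ∀ C : Base, R a B C → Valid R C φ

/-- Validity of φ at ℬ from a (nonempty) set of assumptions Γ. -/
def GammaValid {A : Type} (R : A → Base → Base → Prop)
    (Γ : Set (Form A)) (B : Base) (φ : Form A) : Prop :=
  ∀ C : Base, B ⊆ C → (∀ ψ ∈ Γ, Valid R C ψ) → Valid R C φ

def Euclidean {X : Sort*} (r : X → X → Prop) : Prop :=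
  ∀ x y z, r x y → r x z → r y z

/-- S5-modal relations on bases. -/
structure S5Rel (r : Base → Base → Prop) : Prop where
  incon_succ : ∀ B, Inconsistent B →
    (∃ C, r B C ∧ Inconsistent C) ∧ ∀ D, r B D → Inconsistent D
  con_succ : ∀ B, ¬ Inconsistent B → ∀ C, r B C → ¬ Inconsistent C
  zig : ∀ B C, r B C → ∀ D, B ⊆ D → ¬ Inconsistent D → ∃ E, C ⊆ E ∧ r D E
  zag : ∀ B C, r B C → ¬ Inconsistent C → ∀ D, D ⊆ B → ∃ E, E ⊆ C ∧ r D E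
  refl : ∀ B, r B B
  trans : ∀ B C D, r B C → r C D → r B D
  eucl : ∀ B C D, r B C → r B D → r C D

/-- Maximally-consistent bases. -/
def MaxCon (B : Base) : Prop :=
  ¬ Inconsistent B ∧ ∀ δ : Rule, δ ∈ B ∨ Inconsistent (insert δ B)

/-- A formula is valid iff it is valid at every base for every family of S5-modal relations. -/
def ValidAll {A : Type} (φ : Form A) : Prop :=
  ∀ R : A → Base → Base → Prop, (∀ a, S5Rel (R a)) → ∀ B : Base, Valid R B φ

lemma deriv_mono {B C : Base} (hBC : B ⊆ C) {p : ℕ} (h : Deriv B p) : Deriv C p := by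
  induction h with
  | step L p mem prem ih => exact Deriv.step L p (hBC mem) ih

lemma incon_mono {B C : Base} (hBC : B ⊆ C) (h : Inconsistent B) : Inconsistent C :=
  fun p => deriv_mono hBC (h p)

/-- Derivations use only finitely many rules. -/
lemma deriv_finite {B : Base} {p : ℕ} (h : Deriv B p) :
    ∃ F : Finset Rule, ↑F ⊆ B ∧ Deriv (↑F : Base) p := by
  induction h with
  | step L p mem prem ih =>
    choose f hf1 hf2 using fun q hq => ih q hq
    refine ⟨insert (L, p) (L.attach.biUnion fun q => f q q.2), ?_, ?_⟩
    · intro x hx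
      simp only [Finset.coe_insert, Set.mem_insert_iff, Finset.coe_biUnion,
        Finset.mem_coe, Finset.mem_attach, Set.iUnion_true, Set.mem_iUnion] at hx
      rcases hx with rfl | ⟨⟨q, hq⟩, hx⟩
      · exact mem
      · exact hf1 q hq hx
    · refine Deriv.step L p (by simp) fun q hq => ?_
      refine deriv_mono ?_ (hf2 q hq)
      intro x hx
      simp only [Finset.coe_insert, Set.mem_insert_iff, Finset.coe_biUnion,
        Finset.mem_coe, Finset.mem_attach, Set.iUnion_true, Set.mem_iUnion]
      exact Or.inr ⟨⟨q, hq⟩, hx⟩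

/-- Adding a rule whose premiss contains `p` cannot make `p` derivable. -/
lemma deriv_insert_prem {C : Base} {p q x : ℕ}
    (h : Deriv (insert (({p} : Finset ℕ), q) C) x) : Deriv C p ∨ Deriv C x := by
  induction h with
  | step L y mem prem ih =>
    rcases mem with heq | hmem
    · have hL : L = {p} := (Prod.ext_iff.mp heq).1
      have : p ∈ L := by rw [hL]; simp
      rcases ih p this with h' | h' <;> exact Or.inl h'
    · by_cases hall : ∀ z ∈ L, Deriv C z
      · exact Or.inr (Deriv.step L y hmem hall)
      · push_neg at hall
        obtain ⟨z, hz, hnz⟩ := hall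
        rcases ih z hz with h' | h'
        · exact Or.inl h'
        · exact absurd h' hnz

/-- Lindenbaum-style lemma: a base not deriving `p` extends to a maximally-consistent
base still not deriving `p`. -/
lemma lindenbaum {B : Base} {p : ℕ} (hp : ¬ Deriv B p) :
    ∃ C : Base, B ⊆ C ∧ MaxCon C ∧ ¬ Deriv C p := by
  set S : Set Base := {C | B ⊆ C ∧ ¬ Deriv C p} with hS
  obtain ⟨C, hBC, hCmem, hCmax⟩ :
      ∃ C, B ⊆ C ∧ (· ∈ S) C ∧ ∀ D ∈ S, C ⊆ D → D ⊆ C := by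
    have H : ∀ c ⊆ S, IsChain (· ⊆ ·) c → c.Nonempty →
        ∃ ub ∈ S, ∀ s ∈ c, s ⊆ ub := by
      intro c hcS hchain hcne
      refine ⟨⋃₀ c, ⟨?_, ?_⟩, fun s hs => Set.subset_sUnion_of_mem hs⟩
      · obtain ⟨s, hs⟩ := hcne
        exact (hcS hs).1.trans (Set.subset_sUnion_of_mem hs)
      · intro hder
        obtain ⟨F, hF1, hF2⟩ := deriv_finite hder
        have : Nonempty c := hcne.to_subtype
        have hdir : Directed (· ⊆ ·) (fun s : c => (s : Base)) := by
          intro ⟨s, hs⟩ ⟨t, ht⟩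
          rcases hchain.total hs ht with h' | h'
          · exact ⟨⟨t, ht⟩, h', subset_rfl⟩
          · exact ⟨⟨s, hs⟩, subset_rfl, h'⟩
        have hF1' : ↑F ⊆ ⋃ s : c, (s : Base) := by
          rwa [← Set.sUnion_eq_iUnion]
        obtain ⟨⟨s, hs⟩, hFs⟩ := hdir.exists_mem_subset_of_finset_subset_biUnion hF1'
        exact (hcS hs).2 (deriv_mono hFs hF2)
    obtain ⟨m, hm1, hm2⟩ := zorn_subset_nonempty S H B ⟨subset_rfl, hp⟩
    exact ⟨m, hm1, hm2.1, fun D hD hsub => hm2.2 hD hsub⟩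
  have hCp : ¬ Deriv C p := hCmem.2
  -- every rule ({p}, q) belongs to C
  have hrules : ∀ q : ℕ, (({p} : Finset ℕ), q) ∈ C := by
    intro q
    have hmem : insert (({p} : Finset ℕ), q) C ∈ S := by
      refine ⟨hCmem.1.trans (Set.subset_insert _ _), fun hd => ?_⟩
      rcases deriv_insert_prem hd with h' | h' <;> exact hCp h'
    exact hCmax _ hmem (Set.subset_insert _ _) (Set.mem_insert _ _)
  refine ⟨C, hBC, ⟨fun hinc => hCp (hinc p), ?_⟩, hCp⟩
  intro δ
  by_cases hδ : δ ∈ C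
  · exact Or.inl hδ
  · right
    have hnotS : insert δ C ∉ S := by
      intro hmem
      exact hδ (hCmax _ hmem (Set.subset_insert _ _) (Set.mem_insert _ _))
    have hderp : Deriv (insert δ C) p := by
      by_contra hnd
      exact hnotS ⟨hCmem.1.trans (Set.subset_insert _ _), hnd⟩
    intro q
    exact Deriv.step {p} q (Set.subset_insert _ _ (hrules q)) (by simpa using hderp)

/-- Inconsistent bases validate every formula. -/
lemma incon_valid {A : Type} {R : A → Base → Base → Prop} (hR : ∀ a, S5Rel (R a))
    (φ : Form A) : ∀ B : Base, Inconsistent B → Valid R B φ := by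
  induction φ with
  | atom p => exact fun B hB => hB p
  | bot => exact fun B hB => hB
  | imp φ ψ ihφ ihψ => exact fun B hB C hBC _ => ihψ C (incon_mono hBC hB)
  | K a φ ih => exact fun B hB C hRC => ih C (((hR a).incon_succ B hB).2 C hRC)

/-- Validity is monotone under base extension. -/
lemma valid_mono {A : Type} {R : A → Base → Base → Prop} (hR : ∀ a, S5Rel (R a))
    (φ : Form A) : ∀ B C : Base, B ⊆ C → Valid R B φ → Valid R C φ := by
  induction φ with
  | atom p => exact fun B C hBC h => deriv_mono hBC h
  | bot => exact fun B C hBC h p => deriv_mono hBC (h p)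
  | imp φ ψ ihφ ihψ => exact fun B C hBC h D hCD hφ => h D (hBC.trans hCD) hφ
  | K a φ ih =>
    intro B C hBC h E hCE
    by_cases hE : Inconsistent E
    · exact incon_valid hR φ E hE
    · obtain ⟨E', hE'E, hRE'⟩ := (hR a).zag C E hCE hE B hBC
      exact ih E' E hE'E (h E' hRE')

lemma maxcon_eq {E E' : Base} (hE : MaxCon E) (hsub : E ⊆ E') (hcon : ¬ Inconsistent E') :
    E' = E := by
  refine Set.Subset.antisymm (fun δ hδ => ?_) hsub
  rcases hE.2 δ with h | h
  · exact h
  · exact absurd (incon_mono (Set.insert_subset hδ hsub) h) hcon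

/-- Non-validity propagates to some maximally-consistent superset base. -/
theorem stmt4 {A : Type} (φ : Form A) (R : A → Base → Base → Prop)
    (hR : ∀ a, S5Rel (R a)) (B : Base) (h : ¬ Valid R B φ) :
    ∃ C : Base, B ⊆ C ∧ MaxCon C ∧ ¬ Valid R C φ := by
  induction φ generalizing B with
  | atom p => exact lindenbaum h
  | bot =>
    have : ∃ p, ¬ Deriv B p := by
      by_contra hc; push_neg at hc; exact h hc
    obtain ⟨p, hp⟩ := this
    obtain ⟨C, hBC, hmax, hCp⟩ := lindenbaum hp
    exact ⟨C, hBC, hmax, fun hv => hCp (hv p)⟩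
  | imp φ ψ ihφ ihψ =>
    have : ∃ D : Base, B ⊆ D ∧ Valid R D φ ∧ ¬ Valid R D ψ := by
      by_contra hc; push_neg at hc
      exact h fun D hBD hφ => hc D hBD hφ
    obtain ⟨D, hBD, hDφ, hDψ⟩ := this
    obtain ⟨E, hDE, hmax, hEψ⟩ := ihψ D hDψ
    refine ⟨E, hBD.trans hDE, hmax, fun hv => ?_⟩
    exact hEψ (hv E subset_rfl (valid_mono hR φ D E hDE hDφ))
  | K a φ ih =>
    have : ∃ D : Base, R a B D ∧ ¬ Valid R D φ := by
      by_contra hc; push_neg at hc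
      exact h fun D hRD => hc D hRD
    obtain ⟨D, hRD, hDφ⟩ := this
    have hDcon : ¬ Inconsistent D := fun hinc => hDφ (incon_valid hR φ D hinc)
    obtain ⟨E, hDE, hEmax, hEφ⟩ := ih D hDφ
    have hRDB : R a D B := (hR a).eucl B D B hRD ((hR a).refl B)
    obtain ⟨F, hBF, hREF⟩ := (hR a).zig D B hRDB E hDE hEmax.1
    have hRFE : R a F E := (hR a).eucl E F E hREF ((hR a).refl E)
    have hFcon : ¬ Inconsistent F := (hR a).con_succ E hEmax.1 F hREF
    have : ∃ p, ¬ Deriv F p := by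
      by_contra hc; push_neg at hc; exact hFcon hc
    obtain ⟨p, hp⟩ := this
    obtain ⟨C, hFC, hCmax, _⟩ := lindenbaum hp
    refine ⟨C, hBF.trans hFC, hCmax, fun hv => ?_⟩
    obtain ⟨E', hEE', hRCE'⟩ := (hR a).zig F E hRFE C hFC hCmax.1
    have hE'con : ¬ Inconsistent E' := (hR a).con_succ C hCmax.1 E' hRCE'
    have hE'eq : E' = E := maxcon_eq hEmax hEE' hE'con
    exact hEφ (hE'eq ▸ hv E' hRCE')
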